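/- Let σ and η be feasible schedules that differ only at a single vertex v (say σ_v = 0, η_v = 1, so Φ(σ,η) = f(v)). Run one coupled step of the parallel Glauber dynamics from (σ,η): sample a single decision schedule m ∈ 𝓘 with probability q_m, and for each vertex one independent uniform coin, and apply the PGD update rule to both σ and η using the same m and the same coins (in particular, a vertex whose activation is decided in both chains uses the same coin, so it activates in both or in neither when both are allowed to activate). Then the resulting coupled pair (σ',η') satisfies E[Φ(σ',η')] − Φ(σ,η) ≤ −q_v f(v) + Σ_{w∈N_v} q_w (λ_w/(1+λ_w)) f(w), where Φ(σ,η) = Σ_{u : σ_u ≠ η_u} f(u) for a positive weight function f on V. -/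

import Mathlib

open Finset

variable {V : Type*} [Fintype V] [DecidableEq V]

/-- A finite set of vertices is independent in `G`. -/
def IsInd (G : SimpleGraph V) [DecidableRel G.Adj] (s : Finset V) : Prop :=
  ∀ v ∈ s, ∀ w ∈ s, ¬ G.Adj v w

instance (G : SimpleGraph V) [DecidableRel G.Adj] (s : Finset V) :
    Decidable (IsInd G s) := by
  unfold IsInd; infer_instance

/-- `q_v`: probability that vertex `v` belongs to the decision schedule. -/
noncomputable def qVert (q : Finset V → ℝ) (v : V) : ℝ :=
  ∑ m ∈ univ.filter (fun m => v ∈ m), q m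

/-- Per-vertex factor of the transition probability of the parallel Glauber
dynamics, given current schedule `σ`, decision schedule `m`, next schedule `σ'`. -/
noncomputable def stepFactor (G : SimpleGraph V) [DecidableRel G.Adj] (lam : V → ℝ)
    (σ m σ' : Finset V) (v : V) : ℝ :=
  if v ∈ m then
    (if ∃ w ∈ σ, G.Adj v w then (if v ∈ σ' then 0 else 1)
     else (if v ∈ σ' then lam v / (1 + lam v) else 1 / (1 + lam v)))
  else (if (v ∈ σ' ↔ v ∈ σ) then 1 else 0)

/-- Transition matrix of the parallel Glauber dynamics. -/
noncomputable def pgdP (G : SimpleGraph V) [DecidableRel G.Adj] (lam : V → ℝ)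
    (q : Finset V → ℝ) (σ σ' : Finset V) : ℝ :=
  ∑ m : Finset V, q m * ∏ v : V, stepFactor G lam σ m σ' v

/-- Distribution at time `t` of a Markov chain with transition matrix `P`
started at state `x`. -/
noncomputable def chainDist {S : Type*} [Fintype S] [DecidableEq S]
    (P : S → S → ℝ) (x : S) : ℕ → S → ℝ
  | 0 => fun s => if s = x then 1 else 0
  | t + 1 => fun s => ∑ s' : S, chainDist P x t s' * P s' s

/-- `t`-step transition probabilities. -/
noncomputable def chainPow {S : Type*} [Fintype S] [DecidableEq S]
    (P : S → S → ℝ) : ℕ → S → S → ℝ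
  | 0 => fun x y => if x = y then 1 else 0
  | t + 1 => fun x y => ∑ z : S, chainPow P t x z * P z y

/-- Total variation distance between two distributions on a finite set. -/
noncomputable def tvDist {S : Type*} [Fintype S] (μ ν : S → ℝ) : ℝ :=
  (1 / 2) * ∑ s : S, |μ s - ν s|

/-- The product-form distribution on independent sets with fugacities `lam`. -/
noncomputable def prodForm (G : SimpleGraph V) [DecidableRel G.Adj]
    (lam : V → ℝ) (σ : Finset V) : ℝ :=
  if IsInd G σ then
    (∏ v ∈ σ, lam v) / (∑ σ' ∈ univ.filter (fun s => IsInd G s), ∏ v ∈ σ', lam v)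
  else 0

/-- Mixing time: the maximum over starting states in `states` of the first time
the distribution is within `1/e` of `π` in total variation. -/
noncomputable def mixTime {S : Type*} [Fintype S] [DecidableEq S]
    (P : S → S → ℝ) (π : S → ℝ) (states : Finset S) : ℕ :=
  states.sup fun x => sInf {t : ℕ | tvDist (chainDist P x t) π ≤ 1 / Real.exp 1}

/-- The next schedule under the PGD update rule, given the current schedule `σ`,
the decision schedule `m`, and the activation coins `c` (vertex `v` activates
when its coin `c v` is `true` and it is allowed to). -/
def coupledNext (G : SimpleGraph V) [DecidableRel G.Adj]
    (σ m : Finset V) (c : V → Bool) : Finset V :=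
  univ.filter (fun v =>
    (v ∈ m ∧ ¬ (∃ w ∈ σ, G.Adj v w) ∧ c v = true) ∨ (v ∉ m ∧ v ∈ σ))

/-- Probability of a configuration of independent activation coins, where coin
`v` is `true` with probability `λ_v/(1+λ_v)`. -/
noncomputable def coinProb (lam : V → ℝ) (c : V → Bool) : ℝ :=
  ∏ v : V, (if c v then lam v / (1 + lam v) else 1 / (1 + lam v))

/-- Weighted Hamming distance `Φ(σ,η) = Σ_{u ∈ σ Δ η} f(u)` between schedules. -/
def wHamming (f : V → ℝ) (σ η : Finset V) : ℝ :=
  ∑ u ∈ symmDiff σ η, f u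


section AuxPGD
variable {V : Type*} [Fintype V] [DecidableEq V]

lemma sum_pi_bool (g : V → Bool → ℝ) :
    ∑ c : V → Bool, ∏ v, g v (c v) = ∏ v, (g v false + g v true) := by
  have h := Finset.prod_univ_sum (fun _ : V => (univ : Finset Bool)) g
  rw [Fintype.piFinset_univ] at h
  rw [← h]
  exact Finset.prod_congr rfl fun v _ => by simp [Fintype.sum_bool, add_comm]

lemma coinProb_nonneg (lam : V → ℝ) (hlam : ∀ v, 0 < lam v) (c : V → Bool) :
    0 ≤ coinProb lam c := by
  unfold coinProb
  apply Finset.prod_nonneg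
  intro v _
  have h1 : (0:ℝ) < 1 + lam v := by linarith [hlam v]
  have h2 := (hlam v).le
  split
  · exact div_nonneg h2 h1.le
  · exact div_nonneg zero_le_one h1.le

lemma coin_sum_one (lam : V → ℝ) (hlam : ∀ v, 0 < lam v) :
    ∑ c : V → Bool, coinProb lam c = 1 := by
  unfold coinProb
  rw [sum_pi_bool (fun v b => if b then lam v / (1 + lam v) else 1 / (1 + lam v))]
  rw [Finset.prod_eq_one]
  intro v _
  have h1 : (1:ℝ) + lam v ≠ 0 := by linarith [hlam v]
  simp only [Bool.false_eq_true, if_false, if_true]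
  field_simp

lemma coin_sum_ind (lam : V → ℝ) (hlam : ∀ v, 0 < lam v) (w : V) :
    ∑ c : V → Bool, coinProb lam c * (if c w then (1:ℝ) else 0)
      = lam w / (1 + lam w) := by
  unfold coinProb
  have key : ∀ c : V → Bool,
      (∏ v : V, (if c v then lam v / (1 + lam v) else 1 / (1 + lam v))) * (if c w then (1:ℝ) else 0)
      = ∏ v : V, ((if c v then lam v / (1 + lam v) else 1 / (1 + lam v))
          * (if v = w then (if c v then (1:ℝ) else 0) else 1)) := by
    intro c
    rw [Finset.prod_mul_distrib]
    congr 1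
    rw [Finset.prod_ite_eq' univ w]
    simp
  rw [Finset.sum_congr rfl fun c _ => key c]
  rw [sum_pi_bool (fun v b => (if b then lam v / (1 + lam v) else 1 / (1 + lam v))
          * (if v = w then (if b then (1:ℝ) else 0) else 1))]
  have : ∀ v : V, ((if false then lam v / (1 + lam v) else 1 / (1 + lam v))
          * (if v = w then (if false then (1:ℝ) else 0) else 1))
        + ((if true then lam v / (1 + lam v) else 1 / (1 + lam v))
          * (if v = w then (if true then (1:ℝ) else 0) else 1))
      = if v = w then lam w / (1 + lam w) else 1 := by
    intro v
    by_cases h : v = w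
    · subst h; simp
    · have h1 : (1:ℝ) + lam v ≠ 0 := by linarith [hlam v]
      simp [h]
      field_simp
  rw [Finset.prod_congr rfl fun v _ => this v]
  rw [Finset.prod_ite_eq' univ w]
  simp

lemma symmDiff_next_subset (G : SimpleGraph V) [DecidableRel G.Adj]
    (σ m : Finset V) (c : V → Bool) (v : V) (hv : v ∉ σ) (u : V)
    (hu : u ∈ symmDiff (coupledNext G σ m c) (coupledNext G (insert v σ) m c)) :
    (u = v ∧ v ∉ m) ∨ (G.Adj v u ∧ u ∈ m ∧ c u = true) := by
  have hmem : ∀ (s : Finset V), u ∈ coupledNext G s m c ↔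
      ((u ∈ m ∧ ¬(∃ w ∈ s, G.Adj u w) ∧ c u = true) ∨ (u ∉ m ∧ u ∈ s)) := by
    intro s; simp [coupledNext]
  rw [Finset.mem_symmDiff, hmem, hmem] at hu
  have hQ : (∃ w ∈ insert v σ, G.Adj u w) ↔ (G.Adj u v ∨ ∃ w ∈ σ, G.Adj u w) := by
    simp [Finset.mem_insert, or_and_right, exists_or]
  rw [hQ, Finset.mem_insert] at hu
  by_cases huv : u = v
  · subst huv
    refine Or.inl ⟨rfl, fun hm => ?_⟩
    have hirr : ¬ G.Adj u u := fun h => G.irrefl h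
    generalize (∃ w ∈ σ, G.Adj u w) = P at hu
    tauto
  · by_cases hadj : G.Adj u v
    · refine Or.inr ⟨hadj.symm, ?_⟩
      generalize (∃ w ∈ σ, G.Adj u w) = P at hu
      tauto
    · exfalso
      generalize (∃ w ∈ σ, G.Adj u w) = P at hu
      tauto

end AuxPGD

/-- Lemma 1 of the paper: one coupled step of the parallel
Glauber dynamics from two feasible schedules differing only at `v` contracts the
expected weighted Hamming distance:
`E[Φ(σ',η')] - Φ(σ,η) ≤ -q_v f(v) + Σ_{w∈N_v} q_w (λ_w/(1+λ_w)) f(w)`. -/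
theorem pgd_coupling_one_step
    {V : Type*} [Fintype V] [DecidableEq V]
    (G : SimpleGraph V) [DecidableRel G.Adj]
    (lam : V → ℝ) (hlam : ∀ v, 0 < lam v)
    (q : Finset V → ℝ)
    (hq0 : ∀ m, 0 ≤ q m)
    (hqsupp : ∀ m, ¬ IsInd G m → q m = 0)
    (hqsum : ∑ m : Finset V, q m = 1)
    (f : V → ℝ) (hf : ∀ v, 0 < f v)
    (σ η : Finset V) (v : V)
    (hσ : IsInd G σ) (hη : IsInd G η)
    (hv : v ∉ σ) (hην : η = insert v σ) :
    (∑ m : Finset V, ∑ c : V → Bool,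
        q m * coinProb lam c *
          wHamming f (coupledNext G σ m c) (coupledNext G η m c))
      - wHamming f σ η ≤
    - qVert q v * f v +
      ∑ w ∈ G.neighborFinset v, qVert q w * (lam w / (1 + lam w)) * f w := by
  subst hην
  set N := G.neighborFinset v with hN
  -- Φ(σ,η) = f v
  have hΦ : wHamming f σ (insert v σ) = f v := by
    unfold wHamming
    have hsd : symmDiff σ (insert v σ) = {v} := by
      ext u
      simp only [Finset.mem_symmDiff, Finset.mem_insert, Finset.mem_singleton]
      constructor
      · rintro (⟨h1, h2⟩ | ⟨(h | h), h2⟩) <;> tauto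
      · rintro rfl; tauto
    rw [hsd, Finset.sum_singleton]
  -- pointwise bound on one coupled step
  have key : ∀ (m : Finset V) (c : V → Bool),
      wHamming f (coupledNext G σ m c) (coupledNext G (insert v σ) m c)
        ≤ (if v ∈ m then 0 else f v)
          + ∑ w ∈ N, (if w ∈ m ∧ c w = true then f w else 0) := by
    intro m c
    have hvN : v ∉ N := by
      rw [hN]
      exact fun h => G.irrefl ((SimpleGraph.mem_neighborFinset G v v).mp h)
    have hdisj : Disjoint (if v ∈ m then (∅ : Finset V) else {v})
        (N.filter (fun w => w ∈ m ∧ c w = true)) := by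
      by_cases hm : v ∈ m
      · simp [hm]
      · simp only [hm, if_neg, if_false]
        rw [Finset.disjoint_singleton_left]
        intro hcon
        exact hvN (Finset.mem_of_mem_filter v hcon)
    have hsub : symmDiff (coupledNext G σ m c) (coupledNext G (insert v σ) m c) ⊆
        (if v ∈ m then (∅ : Finset V) else {v})
          ∪ N.filter (fun w => w ∈ m ∧ c w = true) := by
      intro u hu
      rcases symmDiff_next_subset G σ m c v hv u hu with ⟨rfl, hm⟩ | ⟨hadj, hm, hc⟩
      · simp [hm]
      · refine Finset.mem_union_right _ ?_
        rw [Finset.mem_filter]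
        exact ⟨by simp [hN, SimpleGraph.mem_neighborFinset, hadj], hm, hc⟩
    calc wHamming f (coupledNext G σ m c) (coupledNext G (insert v σ) m c)
        = ∑ u ∈ symmDiff (coupledNext G σ m c) (coupledNext G (insert v σ) m c), f u := rfl
      _ ≤ ∑ u ∈ (if v ∈ m then (∅ : Finset V) else {v})
            ∪ N.filter (fun w => w ∈ m ∧ c w = true), f u :=
          Finset.sum_le_sum_of_subset_of_nonneg hsub (fun i _ _ => (hf i).le)
      _ = (if v ∈ m then 0 else f v)
          + ∑ w ∈ N, (if w ∈ m ∧ c w = true then f w else 0) := by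
          rw [Finset.sum_union hdisj]
          congr 1
          · by_cases hm : v ∈ m <;> simp [hm]
          · rw [Finset.sum_filter]
  -- expectation of the bound
  have hnn : ∀ (m : Finset V) (c : V → Bool), 0 ≤ q m * coinProb lam c :=
    fun m c => mul_nonneg (hq0 m) (coinProb_nonneg lam hlam c)
  have step1 : (∑ m : Finset V, ∑ c : V → Bool,
      q m * coinProb lam c *
        wHamming f (coupledNext G σ m c) (coupledNext G (insert v σ) m c))
      ≤ ∑ m : Finset V, ∑ c : V → Bool, q m * coinProb lam c *
          ((if v ∈ m then 0 else f v)
            + ∑ w ∈ N, (if w ∈ m ∧ c w = true then f w else 0)) :=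
    Finset.sum_le_sum fun m _ => Finset.sum_le_sum fun c _ =>
      mul_le_mul_of_nonneg_left (key m c) (hnn m c)
  -- compute the inner expectation over coins
  have hinner : ∀ m : Finset V, (∑ c : V → Bool, q m * coinProb lam c *
        ((if v ∈ m then 0 else f v)
          + ∑ w ∈ N, (if w ∈ m ∧ c w = true then f w else 0)))
      = q m * (if v ∈ m then 0 else f v)
        + ∑ w ∈ N, q m * (if w ∈ m then (1:ℝ) else 0) * (lam w / (1 + lam w)) * f w := by
    intro m
    have e1 : ∀ c : V → Bool, q m * coinProb lam c *
        ((if v ∈ m then 0 else f v)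
          + ∑ w ∈ N, (if w ∈ m ∧ c w = true then f w else 0))
        = q m * (if v ∈ m then 0 else f v) * coinProb lam c
          + ∑ w ∈ N, q m * (if w ∈ m then (1:ℝ) else 0) * f w *
              (coinProb lam c * (if c w then (1:ℝ) else 0)) := by
      intro c
      rw [mul_add]
      congr 1
      · ring
      · rw [Finset.mul_sum]
        refine Finset.sum_congr rfl fun w _ => ?_
        by_cases h1 : w ∈ m <;> by_cases h2 : c w <;> simp [h1, h2] <;> ring
    rw [Finset.sum_congr rfl fun c _ => e1 c, Finset.sum_add_distrib]
    congr 1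
    · rw [← Finset.mul_sum, coin_sum_one lam hlam, mul_one]
    · rw [Finset.sum_comm]
      refine Finset.sum_congr rfl fun w _ => ?_
      rw [← Finset.mul_sum, coin_sum_ind lam hlam w]
      ring
  -- compute the outer expectation over decision schedules
  have houter : (∑ m : Finset V, (q m * (if v ∈ m then 0 else f v)
        + ∑ w ∈ N, q m * (if w ∈ m then (1:ℝ) else 0) * (lam w / (1 + lam w)) * f w))
      = (1 - qVert q v) * f v
        + ∑ w ∈ N, qVert q w * (lam w / (1 + lam w)) * f w := by
    rw [Finset.sum_add_distrib]
    congr 1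
    · have e2 : ∀ m : Finset V, q m * (if v ∈ m then (0:ℝ) else f v)
          = q m * f v - (if v ∈ m then q m else 0) * f v := by
        intro m; by_cases h : v ∈ m <;> simp [h]
      rw [Finset.sum_congr rfl fun m _ => e2 m, Finset.sum_sub_distrib,
        ← Finset.sum_mul, ← Finset.sum_mul, hqsum, ← Finset.sum_filter]
      unfold qVert
      ring
    · rw [Finset.sum_comm]
      refine Finset.sum_congr rfl fun w _ => ?_
      have e3 : ∀ m : Finset V, q m * (if w ∈ m then (1:ℝ) else 0) * (lam w / (1 + lam w)) * f w
          = (if w ∈ m then q m else 0) * ((lam w / (1 + lam w)) * f w) := by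
        intro m; by_cases h : w ∈ m <;> simp [h, mul_assoc]
      rw [Finset.sum_congr rfl fun m _ => e3 m, ← Finset.sum_mul, ← Finset.sum_filter]
      unfold qVert
      ring
  have step2 : (∑ m : Finset V, ∑ c : V → Bool,
      q m * coinProb lam c *
        wHamming f (coupledNext G σ m c) (coupledNext G (insert v σ) m c))
      ≤ (1 - qVert q v) * f v
        + ∑ w ∈ N, qVert q w * (lam w / (1 + lam w)) * f w := by
    calc (∑ m : Finset V, ∑ c : V → Bool,
        q m * coinProb lam c *
          wHamming f (coupledNext G σ m c) (coupledNext G (insert v σ) m c))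
        ≤ _ := step1
      _ = _ := by rw [Finset.sum_congr rfl fun m _ => hinner m, houter]
  rw [hΦ]
  have hr : (1 - qVert q v) * f v = f v - qVert q v * f v := by ring
  rw [hr] at step2
  have : -qVert q v * f v = -(qVert q v * f v) := by ring
  rw [this]
  linarith [step2]
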